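/- Fix a loss function ℓ : ℝ × Y → ℝ, λ > 0, samples (x_i, y_i) ∈ ℝ^p × Y for i = 1,…,m, and for each j = 1,…,p a strictly monotone continuous bijection φ_j : ℝ → ℝ; write φ(x) = (φ_1(x_1),…,φ_p(x_p)). For any tuple (f_1,…,f_p) of compactly supported functions f_j : ℝ → ℝ with f(x) = Σ_j f_j(x_j), the objective value Σ_{i=1}^m ℓ(f(φ(x_i)), y_i) + λ Σ_{j=1}^p TV(f_j) equals Σ_{i=1}^m ℓ((f∘φ)(x_i), y_i) + λ Σ_{j=1}^p TV(f_j ∘ φ_j). Consequently, if the tuple (f*_1,…,f*_p) minimizes the objective with respect to the transformed samples (φ(x_i), y_i), then the tuple (f*_1∘φ_1,…,f*_p∘φ_p) minimizes the objective with respect to the original samples (x_i, y_i). -/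
import Mathlib


/-- Total variation of a function `f : ℝ → ℝ`: the supremum over all strictly
increasing sequences `x : ℕ → ℝ` of `∑' n, |f (x n) - f (x (n+1))|`. -/
noncomputable def TV (f : ℝ → ℝ) : ℝ :=
  sSup {v : ℝ | ∃ x : ℕ → ℝ, StrictMono x ∧ v = ∑' n, |f (x n) - f (x (n + 1))|}

namespace TVaux

open Set Function

/-- The set of tsums over strictly increasing sequences. -/
def V (f : ℝ → ℝ) : Set ℝ :=
  {v : ℝ | ∃ x : ℕ → ℝ, StrictMono x ∧ v = ∑' n, |f (x n) - f (x (n + 1))|}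

/-- Finite chain sums. -/
def FC (f : ℝ → ℝ) : Set ℝ :=
  {v : ℝ | ∃ N, ∃ t : ℕ → ℝ, StrictMono t ∧
    v = ∑ n ∈ Finset.range N, |f (t n) - f (t (n + 1))|}

lemma V_nonempty (f : ℝ → ℝ) : (V f).Nonempty :=
  ⟨_, ⟨fun n => (n : ℝ), Nat.strictMono_cast, rfl⟩⟩

lemma ub_eq (f : ℝ → ℝ) (B : ℝ) (hB : ∀ t, B < t → f t = 0) :
    upperBounds (V f) = upperBounds (FC f) := by
  ext c
  constructor
  · rintro hc v ⟨N, t, ht, rfl⟩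
    set C := max (t N) B with hC
    set z : ℕ → ℝ := fun n => if n ≤ N then t n else C + (n - N : ℕ) with hz
    have hzmono : StrictMono z := by
      intro a b hab
      rcases le_or_gt b N with hb | hb
      · simp only [hz, if_pos (hab.le.trans hb), if_pos hb]
        exact ht hab
      rcases le_or_gt a N with ha | ha
      · simp only [hz, if_pos ha, if_neg (not_le.mpr hb)]
        have h1 : t a ≤ t N := ht.monotone ha
        have h2 : (1 : ℝ) ≤ (b - N : ℕ) := by
          have : 1 ≤ b - N := by omega
          exact_mod_cast this
        have h3 : t N ≤ C := le_max_left _ _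
        linarith
      · simp only [hz, if_neg (not_le.mpr ha), if_neg (not_le.mpr hb)]
        have h4 : (a - N : ℕ) < (b - N : ℕ) := by omega
        have : ((a - N : ℕ) : ℝ) < ((b - N : ℕ) : ℝ) := by exact_mod_cast h4
        linarith
    have hzero : ∀ n, N < n → f (z n) = 0 := by
      intro n hn
      apply hB
      have : z n = C + (n - N : ℕ) := by simp [hz, not_le.mpr hn]
      rw [this]
      have h2 : (1 : ℝ) ≤ (n - N : ℕ) := by
        have : 1 ≤ n - N := by omega
        exact_mod_cast this
      have h3 : B ≤ C := le_max_right _ _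
      linarith
    have hsupp : ∀ n ∉ Finset.range (N + 1), |f (z n) - f (z (n + 1))| = 0 := by
      intro n hn
      simp only [Finset.mem_range, not_lt] at hn
      rw [hzero n (by omega), hzero (n + 1) (by omega)]
      simp
    have htsum : (∑' n, |f (z n) - f (z (n + 1))|) =
        ∑ n ∈ Finset.range (N + 1), |f (z n) - f (z (n + 1))| :=
      tsum_eq_sum hsupp
    have hmem : (∑' n, |f (z n) - f (z (n + 1))|) ∈ V f := ⟨z, hzmono, rfl⟩
    have hle := hc hmem
    rw [htsum, Finset.sum_range_succ] at hle
    have heq : ∀ n ∈ Finset.range N, |f (z n) - f (z (n + 1))| = |f (t n) - f (t (n + 1))| := by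
      intro n hn
      simp only [Finset.mem_range] at hn
      simp [hz, Nat.le_of_lt hn, Nat.succ_le_of_lt hn]
    rw [Finset.sum_congr rfl heq] at hle
    have : 0 ≤ |f (z N) - f (z (N + 1))| := abs_nonneg _
    linarith
  · rintro hc v ⟨xs, hx, rfl⟩
    apply Real.tsum_le_of_sum_range_le (fun n => abs_nonneg _)
    intro N
    exact hc ⟨N, xs, hx, rfl⟩

lemma FC_comp_subset_mono (f : ℝ → ℝ) (φ : ℝ → ℝ) (hφ : StrictMono φ) :
    FC (f ∘ φ) ⊆ FC f := by
  rintro v ⟨N, t, ht, rfl⟩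
  exact ⟨N, φ ∘ t, hφ.comp ht, rfl⟩

lemma FC_comp_subset_anti (f : ℝ → ℝ) (φ : ℝ → ℝ) (hφ : StrictAnti φ) :
    FC (f ∘ φ) ⊆ FC f := by
  rintro v ⟨N, t, ht, rfl⟩
  set s : ℕ → ℝ := fun k => if k ≤ N then φ (t (N - k)) else φ (t 0) + (k - N : ℕ) with hs
  have hsmono : StrictMono s := by
    intro a b hab
    rcases le_or_gt b N with hb | hb
    · simp only [hs, if_pos (hab.le.trans hb), if_pos hb]
      exact hφ (ht (by omega))
    rcases le_or_gt a N with ha | ha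
    · simp only [hs, if_pos ha, if_neg (not_le.mpr hb)]
      have h1 : φ (t (N - a)) ≤ φ (t 0) := hφ.antitone (ht.monotone (Nat.zero_le _))
      have h2 : (1 : ℝ) ≤ (b - N : ℕ) := by
        have : 1 ≤ b - N := by omega
        exact_mod_cast this
      linarith
    · simp only [hs, if_neg (not_le.mpr ha), if_neg (not_le.mpr hb)]
      have h4 : (a - N : ℕ) < (b - N : ℕ) := by omega
      have : ((a - N : ℕ) : ℝ) < ((b - N : ℕ) : ℝ) := by exact_mod_cast h4
      linarith
  refine ⟨N, s, hsmono, ?_⟩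
  rw [← Finset.sum_range_reflect (fun n => |(f ∘ φ) (t n) - (f ∘ φ) (t (n + 1))|) N]
  apply Finset.sum_congr rfl
  intro n hn
  simp only [Finset.mem_range] at hn
  have h1 : s n = φ (t (N - n)) := by simp [hs, Nat.le_of_lt hn]
  have h2 : s (n + 1) = φ (t (N - 1 - n)) := by
    have : N - (n + 1) = N - 1 - n := by omega
    simp [hs, Nat.succ_le_of_lt hn, this]
  have h3 : N - 1 - n + 1 = N - n := by omega
  simp only [Function.comp_apply, h1, h2, h3]
  exact abs_sub_comm _ _

lemma invFun_strictMonoOrAnti {φ : ℝ → ℝ} (hm : StrictMono φ ∨ StrictAnti φ)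
    (hb : Function.Bijective φ) :
    StrictMono (Function.invFun φ) ∨ StrictAnti (Function.invFun φ) := by
  have hri : ∀ a, φ (Function.invFun φ a) = a := fun a =>
    Function.rightInverse_invFun hb.2 a
  rcases hm with h | h
  · left
    intro a b hab
    rcases lt_trichotomy (Function.invFun φ a) (Function.invFun φ b) with hh | hh | hh
    · exact hh
    · exfalso; rw [← hri a, ← hri b, hh] at hab; exact lt_irrefl _ hab
    · exfalso
      have := h hh
      rw [hri a, hri b] at this
      exact absurd hab (not_lt.mpr this.le)
  · right
    intro a b hab
    rcases lt_trichotomy (Function.invFun φ b) (Function.invFun φ a) with hh | hh | hh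
    · exact hh
    · exfalso; rw [← hri a, ← hri b, ← hh] at hab; exact lt_irrefl _ hab
    · exfalso
      have := h hh
      rw [hri a, hri b] at this
      exact absurd hab (not_lt.mpr this.le)

lemma FC_comp_eq (f : ℝ → ℝ) (φ : ℝ → ℝ) (hm : StrictMono φ ∨ StrictAnti φ)
    (hb : Function.Bijective φ) : FC (f ∘ φ) = FC f := by
  have hsub : ∀ (g ψ : ℝ → ℝ), StrictMono ψ ∨ StrictAnti ψ → FC (g ∘ ψ) ⊆ FC g := by
    rintro g ψ (h | h)
    · exact FC_comp_subset_mono g ψ h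
    · exact FC_comp_subset_anti g ψ h
  apply Set.Subset.antisymm (hsub f φ hm)
  have hfeq : f = (f ∘ φ) ∘ Function.invFun φ := by
    funext a
    simp [Function.comp, Function.rightInverse_invFun hb.2 a]
  calc FC f = FC ((f ∘ φ) ∘ Function.invFun φ) := by rw [← hfeq]
    _ ⊆ FC (f ∘ φ) := hsub _ _ (invFun_strictMonoOrAnti hm hb)

lemma sSup_eq_of_ub (S T : Set ℝ) (hS : S.Nonempty) (hT : T.Nonempty)
    (h : upperBounds S = upperBounds T) : sSup S = sSup T := by
  by_cases hbdd : BddAbove S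
  · have hbddT : BddAbove T := by rwa [BddAbove, ← h]
    have h1 : IsLUB S (sSup S) := isLUB_csSup hS hbdd
    have h2 : IsLUB T (sSup T) := isLUB_csSup hT hbddT
    have h2' : IsLUB S (sSup T) := by
      refine ⟨by rw [h]; exact h2.1, ?_⟩
      intro b hb
      exact h2.2 (by rwa [← h])
    exact h1.unique h2'
  · have hbddT : ¬ BddAbove T := by rwa [BddAbove, ← h]
    rw [Real.sSup_of_not_bddAbove hbdd, Real.sSup_of_not_bddAbove hbddT]

/-- Compactly supported functions vanish far to the right and left. -/
lemma exists_vanish (f : ℝ → ℝ) (hf : HasCompactSupport f) :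
    ∃ K : ℝ, (∀ t, K < t → f t = 0) ∧ (∀ t, t < -K → f t = 0) := by
  obtain ⟨r, hr⟩ := hf.isBounded.subset_ball 0
  refine ⟨max r 0, ?_, ?_⟩
  · intro t ht
    by_contra h
    have : t ∈ tsupport f := subset_tsupport f (by simpa using h)
    have := hr this
    simp only [Metric.mem_ball, Real.dist_eq, sub_zero] at this
    have : r ≤ max r 0 := le_max_left _ _
    linarith [le_abs_self t]
  · intro t ht
    by_contra h
    have : t ∈ tsupport f := subset_tsupport f (by simpa using h)
    have := hr this
    simp only [Metric.mem_ball, Real.dist_eq, sub_zero] at this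
    have h1 : r ≤ max r 0 := le_max_left _ _
    linarith [neg_abs_le t]

/-- The key invariance: total variation is unchanged under composition with a
strictly monotone bijection, for compactly supported `f`. -/
lemma TV_comp_cs (f φ : ℝ → ℝ) (hm : StrictMono φ ∨ StrictAnti φ)
    (hb : Function.Bijective φ) (hf : HasCompactSupport f) :
    TV (f ∘ φ) = TV f := by
  obtain ⟨K, hKr, hKl⟩ := exists_vanish f hf
  have h2 : ∃ B2 : ℝ, ∀ t, B2 < t → (f ∘ φ) t = 0 := by
    rcases hm with h | h
    · obtain ⟨u, hu⟩ := hb.2 (K + 1)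
      refine ⟨u, fun t ht => hKr (φ t) ?_⟩
      have := h ht
      rw [hu] at this
      linarith
    · obtain ⟨u, hu⟩ := hb.2 (-(K + 1))
      refine ⟨u, fun t ht => hKl (φ t) ?_⟩
      have := h ht
      rw [hu] at this
      linarith
  obtain ⟨B2, h2⟩ := h2
  show sSup (V (f ∘ φ)) = sSup (V f)
  apply sSup_eq_of_ub _ _ (V_nonempty _) (V_nonempty _)
  rw [ub_eq (f ∘ φ) B2 h2, ub_eq f K hKr, FC_comp_eq f φ hm hb]

/-- Compact support is preserved by composing with the inverse of a continuous
bijection. -/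
lemma hcs_comp_inv (f φ : ℝ → ℝ) (hφc : Continuous φ) (hb : Function.Bijective φ)
    (hf : HasCompactSupport f) : HasCompactSupport (f ∘ Function.invFun φ) := by
  have hK : IsCompact (φ '' tsupport f) := hf.image hφc
  apply IsCompact.of_isClosed_subset hK (isClosed_tsupport _)
  apply closure_minimal ?_ hK.isClosed
  intro t ht
  refine ⟨Function.invFun φ t, subset_tsupport f ?_, Function.rightInverse_invFun hb.2 t⟩
  simpa [Function.mem_support] using ht

end TVaux

/-- Invariance of TV-regularized empirical risk minimization under coordinatewise
strictly monotone continuous bijective transformations of the explanatory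
variables: (a) for any tuple of compactly supported weight functions the
objective value on the transformed samples equals the objective value of the
composed tuple on the original samples, and (b) if a tuple minimizes the
objective on the transformed samples then the composed tuple minimizes the
objective on the original samples. -/
theorem tv_erm_invariance {Y : Type*} (p m : ℕ) (ℓ : ℝ → Y → ℝ) (lam : ℝ) (hlam : 0 < lam)
    (x : Fin m → Fin p → ℝ) (y : Fin m → Y)
    (φ : Fin p → ℝ → ℝ)
    (hφmono : ∀ j, StrictMono (φ j) ∨ StrictAnti (φ j))
    (hφcont : ∀ j, Continuous (φ j))
    (hφbij : ∀ j, Function.Bijective (φ j)) :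
    (∀ f : Fin p → ℝ → ℝ, (∀ j, HasCompactSupport (f j)) →
      (∑ i, ℓ (∑ j, f j (φ j (x i j))) (y i)) + lam * ∑ j, TV (f j)
        = (∑ i, ℓ (∑ j, (f j ∘ φ j) (x i j)) (y i)) + lam * ∑ j, TV (f j ∘ φ j)) ∧
    (∀ fstar : Fin p → ℝ → ℝ, (∀ j, HasCompactSupport (fstar j)) →
      (∀ f : Fin p → ℝ → ℝ, (∀ j, HasCompactSupport (f j)) →
        (∑ i, ℓ (∑ j, fstar j (φ j (x i j))) (y i)) + lam * ∑ j, TV (fstar j)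
          ≤ (∑ i, ℓ (∑ j, f j (φ j (x i j))) (y i)) + lam * ∑ j, TV (f j)) →
      (∀ f : Fin p → ℝ → ℝ, (∀ j, HasCompactSupport (f j)) →
        (∑ i, ℓ (∑ j, (fstar j ∘ φ j) (x i j)) (y i)) + lam * ∑ j, TV (fstar j ∘ φ j)
          ≤ (∑ i, ℓ (∑ j, f j (x i j)) (y i)) + lam * ∑ j, TV (f j))) := by
  constructor
  · intro f hf
    have hTV : ∀ j, TV (f j ∘ φ j) = TV (f j) := fun j =>
      TVaux.TV_comp_cs (f j) (φ j) (hφmono j) (hφbij j) (hf j)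
    simp only [Function.comp_apply, hTV]
  · intro fstar hfstar hmin f hf
    have hTVs : ∀ j, TV (fstar j ∘ φ j) = TV (fstar j) := fun j =>
      TVaux.TV_comp_cs (fstar j) (φ j) (hφmono j) (hφbij j) (hfstar j)
    set g : Fin p → ℝ → ℝ := fun j => f j ∘ Function.invFun (φ j) with hgdef
    have hg : ∀ j, HasCompactSupport (g j) := fun j =>
      TVaux.hcs_comp_inv (f j) (φ j) (hφcont j) (hφbij j) (hf j)
    have key := hmin g hg
    have hgφ : ∀ j t, g j (φ j t) = f j t := by
      intro j t
      simp [hgdef, Function.leftInverse_invFun (hφbij j).1 t]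
    have hTVg : ∀ j, TV (g j) = TV (f j) := by
      intro j
      have h1 : TV (g j ∘ φ j) = TV (g j) :=
        TVaux.TV_comp_cs (g j) (φ j) (hφmono j) (hφbij j) (hg j)
      rw [← h1]
      congr 1
      funext t
      exact hgφ j t
    simp only [hgφ, hTVg] at key
    simpa only [Function.comp_apply, hTVs] using key
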